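/- For a two-scenario robust flow instance on a series-parallel digraph with unique source at the origin and unique sink at the target, with demands d^1 <= d^2, there exists an optimal integral robust b-flow f = (f^1, f^2) such that f^2(a) >= f^1(a) for every arc a of the digraph. -/

import Mathlib

open Finset

/-- Syntax trees of series-parallel digraphs: a single arc (with a flag marking it as
a fixed arc, a capacity and a cost), or a series or parallel composition. -/
inductive SPD : Type where
  | arc (isFixed : Bool) (u c : ℤ) : SPD
  | series (g₁ g₂ : SPD) : SPD
  | parallel (g₁ g₂ : SPD) : SPD

namespace SPD

/-- Interior vertices (all vertices except origin and target). -/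
def Inner : SPD → Type
  | arc _ _ _ => Empty
  | series g₁ g₂ => (g₁.Inner ⊕ g₂.Inner) ⊕ Unit
  | parallel g₁ g₂ => g₁.Inner ⊕ g₂.Inner

/-- Vertices: interior vertices plus the origin (`Sum.inr false`) and the
target (`Sum.inr true`). -/
def Vert (g : SPD) : Type := g.Inner ⊕ Bool

def Arcs : SPD → Type
  | arc _ _ _ => Unit
  | series g₁ g₂ => g₁.Arcs ⊕ g₂.Arcs
  | parallel g₁ g₂ => g₁.Arcs ⊕ g₂.Arcs

def origin (g : SPD) : g.Vert := Sum.inr false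
def target (g : SPD) : g.Vert := Sum.inr true

def innerFintype : (g : SPD) → Fintype g.Inner
  | arc _ _ _ => inferInstanceAs (Fintype Empty)
  | series g₁ g₂ =>
      letI := g₁.innerFintype; letI := g₂.innerFintype
      inferInstanceAs (Fintype ((g₁.Inner ⊕ g₂.Inner) ⊕ Unit))
  | parallel g₁ g₂ =>
      letI := g₁.innerFintype; letI := g₂.innerFintype
      inferInstanceAs (Fintype (g₁.Inner ⊕ g₂.Inner))

instance (g : SPD) : Fintype g.Inner := g.innerFintype

def innerDecEq : (g : SPD) → DecidableEq g.Inner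
  | arc _ _ _ => inferInstanceAs (DecidableEq Empty)
  | series g₁ g₂ =>
      letI := g₁.innerDecEq; letI := g₂.innerDecEq
      inferInstanceAs (DecidableEq ((g₁.Inner ⊕ g₂.Inner) ⊕ Unit))
  | parallel g₁ g₂ =>
      letI := g₁.innerDecEq; letI := g₂.innerDecEq
      inferInstanceAs (DecidableEq (g₁.Inner ⊕ g₂.Inner))

instance (g : SPD) : DecidableEq g.Inner := g.innerDecEq
instance (g : SPD) : Fintype g.Vert := inferInstanceAs (Fintype (g.Inner ⊕ Bool))
instance (g : SPD) : DecidableEq g.Vert := inferInstanceAs (DecidableEq (g.Inner ⊕ Bool))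

def arcsFintype : (g : SPD) → Fintype g.Arcs
  | arc _ _ _ => inferInstanceAs (Fintype Unit)
  | series g₁ g₂ =>
      letI := g₁.arcsFintype; letI := g₂.arcsFintype
      inferInstanceAs (Fintype (g₁.Arcs ⊕ g₂.Arcs))
  | parallel g₁ g₂ =>
      letI := g₁.arcsFintype; letI := g₂.arcsFintype
      inferInstanceAs (Fintype (g₁.Arcs ⊕ g₂.Arcs))

instance (g : SPD) : Fintype g.Arcs := g.arcsFintype

def arcsDecEq : (g : SPD) → DecidableEq g.Arcs
  | arc _ _ _ => inferInstanceAs (DecidableEq Unit)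
  | series g₁ g₂ =>
      letI := g₁.arcsDecEq; letI := g₂.arcsDecEq
      inferInstanceAs (DecidableEq (g₁.Arcs ⊕ g₂.Arcs))
  | parallel g₁ g₂ =>
      letI := g₁.arcsDecEq; letI := g₂.arcsDecEq
      inferInstanceAs (DecidableEq (g₁.Arcs ⊕ g₂.Arcs))

instance (g : SPD) : DecidableEq g.Arcs := g.arcsDecEq

/-- Embedding of the vertices of the first factor into a series composition:
the target of `g₁` becomes the merged middle vertex. -/
def vmapS₁ (g₁ g₂ : SPD) : g₁.Vert → (series g₁ g₂).Vert
  | Sum.inl x => Sum.inl (Sum.inl (Sum.inl x))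
  | Sum.inr false => Sum.inr false
  | Sum.inr true => Sum.inl (Sum.inr ())

def vmapS₂ (g₁ g₂ : SPD) : g₂.Vert → (series g₁ g₂).Vert
  | Sum.inl x => Sum.inl (Sum.inl (Sum.inr x))
  | Sum.inr false => Sum.inl (Sum.inr ())
  | Sum.inr true => Sum.inr true

def vmapP₁ (g₁ g₂ : SPD) : g₁.Vert → (parallel g₁ g₂).Vert
  | Sum.inl x => Sum.inl (Sum.inl x)
  | Sum.inr b => Sum.inr b

def vmapP₂ (g₁ g₂ : SPD) : g₂.Vert → (parallel g₁ g₂).Vert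
  | Sum.inl x => Sum.inl (Sum.inr x)
  | Sum.inr b => Sum.inr b

def src : (g : SPD) → g.Arcs → g.Vert
  | arc _ _ _, _ => Sum.inr false
  | series g₁ g₂, Sum.inl a => vmapS₁ g₁ g₂ (g₁.src a)
  | series g₁ g₂, Sum.inr a => vmapS₂ g₁ g₂ (g₂.src a)
  | parallel g₁ g₂, Sum.inl a => vmapP₁ g₁ g₂ (g₁.src a)
  | parallel g₁ g₂, Sum.inr a => vmapP₂ g₁ g₂ (g₂.src a)

def dst : (g : SPD) → g.Arcs → g.Vert
  | arc _ _ _, _ => Sum.inr true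
  | series g₁ g₂, Sum.inl a => vmapS₁ g₁ g₂ (g₁.dst a)
  | series g₁ g₂, Sum.inr a => vmapS₂ g₁ g₂ (g₂.dst a)
  | parallel g₁ g₂, Sum.inl a => vmapP₁ g₁ g₂ (g₁.dst a)
  | parallel g₁ g₂, Sum.inr a => vmapP₂ g₁ g₂ (g₂.dst a)

def cap : (g : SPD) → g.Arcs → ℤ
  | arc _ u _, _ => u
  | series g₁ _, Sum.inl a => g₁.cap a
  | series _ g₂, Sum.inr a => g₂.cap a
  | parallel g₁ _, Sum.inl a => g₁.cap a
  | parallel _ g₂, Sum.inr a => g₂.cap a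

def cost : (g : SPD) → g.Arcs → ℤ
  | arc _ _ c, _ => c
  | series g₁ _, Sum.inl a => g₁.cost a
  | series _ g₂, Sum.inr a => g₂.cost a
  | parallel g₁ _, Sum.inl a => g₁.cost a
  | parallel _ g₂, Sum.inr a => g₂.cost a

def fixedArc : (g : SPD) → g.Arcs → Bool
  | arc b _ _, _ => b
  | series g₁ _, Sum.inl a => g₁.fixedArc a
  | series _ g₂, Sum.inr a => g₂.fixedArc a
  | parallel g₁ _, Sum.inl a => g₁.fixedArc a
  | parallel _ g₂, Sum.inr a => g₂.fixedArc a

/-- Net outflow minus inflow of an integral flow at a vertex. -/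
def excess (g : SPD) (f : g.Arcs → ℤ) (v : g.Vert) : ℤ :=
  ∑ a ∈ univ.filter (fun a => g.src a = v), f a -
    ∑ a ∈ univ.filter (fun a => g.dst a = v), f a

def IsFlow (g : SPD) (b : g.Vert → ℤ) (f : g.Arcs → ℤ) : Prop :=
  (∀ a, 0 ≤ f a ∧ f a ≤ g.cap a) ∧ ∀ v, g.excess f v = b v

def flowCost (g : SPD) (f : g.Arcs → ℤ) : ℤ := ∑ a, g.cost a * f a

/-- Balances of a unique source (the origin) / unique sink (the target) instance
with demand `d`. -/
def bal (g : SPD) (d : ℤ) : g.Vert → ℤ :=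
  fun v => if v = g.origin then d else if v = g.target then -d else 0

/-- A two-scenario integral robust `b`-flow with demands `d₁`, `d₂` from the origin
to the target: both scenario flows are feasible and they agree on all fixed arcs. -/
def IsRobust2 (g : SPD) (d₁ d₂ : ℤ) (f₁ f₂ : g.Arcs → ℤ) : Prop :=
  g.IsFlow (g.bal d₁) f₁ ∧ g.IsFlow (g.bal d₂) f₂ ∧
    ∀ a, g.fixedArc a = true → f₁ a = f₂ a

/-- Cost of a two-scenario robust flow: the maximum scenario cost. -/
def rcost (g : SPD) (f₁ f₂ : g.Arcs → ℤ) : ℤ := max (g.flowCost f₁) (g.flowCost f₂)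

/-- Optimality: minimum cost among all integral robust flows for the same demands. -/
def Optimal (g : SPD) (d₁ d₂ : ℤ) (f₁ f₂ : g.Arcs → ℤ) : Prop :=
  g.IsRobust2 d₁ d₂ f₁ f₂ ∧
    ∀ h₁ h₂, g.IsRobust2 d₁ d₂ h₁ h₂ → g.rcost f₁ f₂ ≤ g.rcost h₁ h₂

/-- Nonnegative capacities and costs. -/
def nonnegData (g : SPD) : Prop := ∀ a, 0 ≤ g.cap a ∧ 0 ≤ g.cost a

end SPD
namespace SPD

lemma sum_arcs_series (g₁ g₂ : SPD) (f : (series g₁ g₂).Arcs → ℤ) :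
    ∑ a, f a = ∑ a : g₁.Arcs, f (Sum.inl a) + ∑ a : g₂.Arcs, f (Sum.inr a) :=
  Fintype.sum_sum_type f

lemma sum_arcs_parallel (g₁ g₂ : SPD) (f : (parallel g₁ g₂).Arcs → ℤ) :
    ∑ a, f a = ∑ a : g₁.Arcs, f (Sum.inl a) + ∑ a : g₂.Arcs, f (Sum.inr a) :=
  Fintype.sum_sum_type f

lemma sum_vert (g : SPD) (f : g.Vert → ℤ) :
    ∑ v, f v = ∑ v : g.Inner, f (Sum.inl v) + (f (Sum.inr true) + f (Sum.inr false)) := by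
  rw [show (∑ v, f v) = ∑ v : g.Inner, f (Sum.inl v) + ∑ b : Bool, f (Sum.inr b) from
    Fintype.sum_sum_type f]
  congr 1
  exact Fintype.sum_bool _

lemma excess_eq (g : SPD) (f : g.Arcs → ℤ) (v : g.Vert) :
    g.excess f v
      = ∑ a, ((if g.src a = v then f a else 0) - (if g.dst a = v then f a else 0)) := by
  unfold excess
  rw [Finset.sum_filter, Finset.sum_filter, ← Finset.sum_sub_distrib]

lemma sum_excess (g : SPD) (f : g.Arcs → ℤ) : ∑ v, g.excess f v = 0 := by
  have h : ∀ v, g.excess f v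
      = ∑ a, ((if g.src a = v then f a else 0) - (if g.dst a = v then f a else 0)) :=
    excess_eq g f
  calc ∑ v, g.excess f v
      = ∑ v, ∑ a, ((if g.src a = v then f a else 0) - (if g.dst a = v then f a else 0)) := by
        exact Finset.sum_congr rfl fun v _ => h v
    _ = ∑ a, ∑ v, ((if g.src a = v then f a else 0) - (if g.dst a = v then f a else 0)) :=
        Finset.sum_comm
    _ = 0 := by
        refine Finset.sum_eq_zero fun a _ => ?_
        rw [Finset.sum_sub_distrib, Finset.sum_ite_eq, Finset.sum_ite_eq]
        simp

lemma excess_sub' (g : SPD) (f h : g.Arcs → ℤ) (v : g.Vert) :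
    g.excess (fun a => f a - h a) v = g.excess f v - g.excess h v := by
  unfold excess
  rw [Finset.sum_sub_distrib, Finset.sum_sub_distrib]
  ring

lemma excess_neg' (g : SPD) (h : g.Arcs → ℤ) (v : g.Vert) :
    g.excess (fun a => -(h a)) v = - g.excess h v := by
  unfold excess
  rw [Finset.sum_neg_distrib, Finset.sum_neg_distrib]
  ring

lemma excess_add' (g : SPD) (f h : g.Arcs → ℤ) (v : g.Vert) :
    g.excess (fun a => f a + h a) v = g.excess f v + g.excess h v := by
  unfold excess
  rw [Finset.sum_add_distrib, Finset.sum_add_distrib]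
  ring

lemma excess_zero (g : SPD) (v : g.Vert) : g.excess (fun _ => (0:ℤ)) v = 0 := by
  simp [excess]

end SPD
namespace SPD

section vmaps
variable (g₁ g₂ : SPD)

lemma vmapS₁_eq_o (x : g₁.Vert) :
    vmapS₁ g₁ g₂ x = (Sum.inr false : (series g₁ g₂).Vert) ↔ x = Sum.inr false := by
  rcases x with x | b
  · simp [vmapS₁, Vert, Inner]
  · cases b <;> simp [vmapS₁, Vert, Inner]

lemma vmapS₂_ne_o (y : g₂.Vert) :
    vmapS₂ g₁ g₂ y ≠ (Sum.inr false : (series g₁ g₂).Vert) := by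
  rcases y with y | b
  · simp [vmapS₂, Vert, Inner]
  · cases b <;> simp [vmapS₂, Vert, Inner]

lemma vmapS₁_ne_t (x : g₁.Vert) :
    vmapS₁ g₁ g₂ x ≠ (Sum.inr true : (series g₁ g₂).Vert) := by
  rcases x with x | b
  · simp [vmapS₁, Vert, Inner]
  · cases b <;> simp [vmapS₁, Vert, Inner]

lemma vmapS₂_eq_t (y : g₂.Vert) :
    vmapS₂ g₁ g₂ y = (Sum.inr true : (series g₁ g₂).Vert) ↔ y = Sum.inr true := by
  rcases y with y | b
  · simp [vmapS₂, Vert, Inner]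
  · cases b <;> simp [vmapS₂, Vert, Inner]

lemma vmapS₁_eq_mid (x : g₁.Vert) :
    vmapS₁ g₁ g₂ x = (Sum.inl (Sum.inr ()) : (series g₁ g₂).Vert) ↔ x = Sum.inr true := by
  rcases x with x | b
  · simp [vmapS₁, Vert, Inner]
  · cases b <;> simp [vmapS₁, Vert, Inner]

lemma vmapS₂_eq_mid (y : g₂.Vert) :
    vmapS₂ g₁ g₂ y = (Sum.inl (Sum.inr ()) : (series g₁ g₂).Vert) ↔ y = Sum.inr false := by
  rcases y with y | b
  · simp [vmapS₂, Vert, Inner]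
  · cases b <;> simp [vmapS₂, Vert, Inner]

lemma vmapS₁_eq_i1 (x : g₁.Vert) (v : g₁.Inner) :
    vmapS₁ g₁ g₂ x = (Sum.inl (Sum.inl (Sum.inl v)) : (series g₁ g₂).Vert) ↔ x = Sum.inl v := by
  rcases x with x | b
  · simp [vmapS₁, Vert, Inner]
  · cases b <;> simp [vmapS₁, Vert, Inner]

lemma vmapS₂_ne_i1 (y : g₂.Vert) (v : g₁.Inner) :
    vmapS₂ g₁ g₂ y ≠ (Sum.inl (Sum.inl (Sum.inl v)) : (series g₁ g₂).Vert) := by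
  rcases y with y | b
  · simp [vmapS₂, Vert, Inner]
  · cases b <;> simp [vmapS₂, Vert, Inner]

lemma vmapS₁_ne_i2 (x : g₁.Vert) (v : g₂.Inner) :
    vmapS₁ g₁ g₂ x ≠ (Sum.inl (Sum.inl (Sum.inr v)) : (series g₁ g₂).Vert) := by
  rcases x with x | b
  · simp [vmapS₁, Vert, Inner]
  · cases b <;> simp [vmapS₁, Vert, Inner]

lemma vmapS₂_eq_i2 (y : g₂.Vert) (v : g₂.Inner) :
    vmapS₂ g₁ g₂ y = (Sum.inl (Sum.inl (Sum.inr v)) : (series g₁ g₂).Vert) ↔ y = Sum.inl v := by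
  rcases y with y | b
  · simp [vmapS₂, Vert, Inner]
  · cases b <;> simp [vmapS₂, Vert, Inner]

lemma vmapP₁_eq_b (x : g₁.Vert) (b : Bool) :
    vmapP₁ g₁ g₂ x = (Sum.inr b : (parallel g₁ g₂).Vert) ↔ x = Sum.inr b := by
  rcases x with x | c
  · simp [vmapP₁, Vert, Inner]
  · simp [vmapP₁, Vert, Inner]

lemma vmapP₂_eq_b (y : g₂.Vert) (b : Bool) :
    vmapP₂ g₁ g₂ y = (Sum.inr b : (parallel g₁ g₂).Vert) ↔ y = Sum.inr b := by
  rcases y with y | c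
  · simp [vmapP₂, Vert, Inner]
  · simp [vmapP₂, Vert, Inner]

lemma vmapP₁_eq_i1 (x : g₁.Vert) (v : g₁.Inner) :
    vmapP₁ g₁ g₂ x = (Sum.inl (Sum.inl v) : (parallel g₁ g₂).Vert) ↔ x = Sum.inl v := by
  rcases x with x | c
  · simp [vmapP₁, Vert, Inner]
  · simp [vmapP₁, Vert, Inner]

lemma vmapP₂_ne_i1 (y : g₂.Vert) (v : g₁.Inner) :
    vmapP₂ g₁ g₂ y ≠ (Sum.inl (Sum.inl v) : (parallel g₁ g₂).Vert) := by
  rcases y with y | c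
  · simp [vmapP₂, Vert, Inner]
  · simp [vmapP₂, Vert, Inner]

lemma vmapP₁_ne_i2 (x : g₁.Vert) (v : g₂.Inner) :
    vmapP₁ g₁ g₂ x ≠ (Sum.inl (Sum.inr v) : (parallel g₁ g₂).Vert) := by
  rcases x with x | c
  · simp [vmapP₁, Vert, Inner]
  · simp [vmapP₁, Vert, Inner]

lemma vmapP₂_eq_i2 (y : g₂.Vert) (v : g₂.Inner) :
    vmapP₂ g₁ g₂ y = (Sum.inl (Sum.inr v) : (parallel g₁ g₂).Vert) ↔ y = Sum.inl v := by
  rcases y with y | c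
  · simp [vmapP₂, Vert, Inner]
  · simp [vmapP₂, Vert, Inner]

end vmaps

end SPD
namespace SPD

section decomp
variable (g₁ g₂ : SPD)

lemma excess_series_o (z : (series g₁ g₂).Arcs → ℤ) :
    (series g₁ g₂).excess z (Sum.inr false)
      = g₁.excess (fun a => z (Sum.inl a)) (Sum.inr false) := by
  classical
  erw [excess_eq, excess_eq, sum_arcs_series]
  simp only [src, dst, vmapS₁_eq_o, vmapS₂_ne_o, if_neg, if_false]
  simp
  convert rfl

lemma excess_series_t (z : (series g₁ g₂).Arcs → ℤ) :
    (series g₁ g₂).excess z (Sum.inr true)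
      = g₂.excess (fun a => z (Sum.inr a)) (Sum.inr true) := by
  classical
  erw [excess_eq, excess_eq, sum_arcs_series]
  simp only [src, dst, vmapS₂_eq_t, vmapS₁_ne_t, if_neg, if_false]
  simp
  convert rfl

lemma excess_series_mid (z : (series g₁ g₂).Arcs → ℤ) :
    (series g₁ g₂).excess z (Sum.inl (Sum.inr ()))
      = g₁.excess (fun a => z (Sum.inl a)) (Sum.inr true)
        + g₂.excess (fun a => z (Sum.inr a)) (Sum.inr false) := by
  classical
  erw [excess_eq, excess_eq, excess_eq, sum_arcs_series]
  simp only [src, dst, vmapS₁_eq_mid, vmapS₂_eq_mid]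
  convert rfl

lemma excess_series_i1 (z : (series g₁ g₂).Arcs → ℤ) (v : g₁.Inner) :
    (series g₁ g₂).excess z (Sum.inl (Sum.inl (Sum.inl v)))
      = g₁.excess (fun a => z (Sum.inl a)) (Sum.inl v) := by
  classical
  erw [excess_eq, excess_eq, sum_arcs_series]
  simp only [src, dst, vmapS₁_eq_i1, vmapS₂_ne_i1, if_neg, if_false]
  simp
  convert rfl

lemma excess_series_i2 (z : (series g₁ g₂).Arcs → ℤ) (v : g₂.Inner) :
    (series g₁ g₂).excess z (Sum.inl (Sum.inl (Sum.inr v)))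
      = g₂.excess (fun a => z (Sum.inr a)) (Sum.inl v) := by
  classical
  erw [excess_eq, excess_eq, sum_arcs_series]
  simp only [src, dst, vmapS₂_eq_i2, vmapS₁_ne_i2, if_neg, if_false]
  simp
  convert rfl

lemma excess_parallel_b (z : (parallel g₁ g₂).Arcs → ℤ) (b : Bool) :
    (parallel g₁ g₂).excess z (Sum.inr b)
      = g₁.excess (fun a => z (Sum.inl a)) (Sum.inr b)
        + g₂.excess (fun a => z (Sum.inr a)) (Sum.inr b) := by
  classical
  erw [excess_eq, excess_eq, excess_eq, sum_arcs_parallel]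
  simp only [src, dst, vmapP₁_eq_b, vmapP₂_eq_b]
  convert rfl

lemma excess_parallel_i1 (z : (parallel g₁ g₂).Arcs → ℤ) (v : g₁.Inner) :
    (parallel g₁ g₂).excess z (Sum.inl (Sum.inl v))
      = g₁.excess (fun a => z (Sum.inl a)) (Sum.inl v) := by
  classical
  erw [excess_eq, excess_eq, sum_arcs_parallel]
  simp only [src, dst, vmapP₁_eq_i1, vmapP₂_ne_i1, if_neg, if_false]
  simp
  convert rfl

lemma excess_parallel_i2 (z : (parallel g₁ g₂).Arcs → ℤ) (v : g₂.Inner) :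
    (parallel g₁ g₂).excess z (Sum.inl (Sum.inr v))
      = g₂.excess (fun a => z (Sum.inr a)) (Sum.inl v) := by
  classical
  erw [excess_eq, excess_eq, sum_arcs_parallel]
  simp only [src, dst, vmapP₂_eq_i2, vmapP₁_ne_i2, if_neg, if_false]
  simp
  convert rfl

end decomp

lemma dst_ne_origin (g : SPD) : ∀ a : g.Arcs, g.dst a ≠ (Sum.inr false : g.Vert) := by
  induction g with
  | arc b u c => intro a h; simp [dst, Vert] at h
  | series g₁ g₂ ih₁ ih₂ =>
    rintro (a | a) h
    · erw [dst, vmapS₁_eq_o] at h; exact ih₁ a h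
    · erw [dst] at h; exact vmapS₂_ne_o g₁ g₂ _ h
  | parallel g₁ g₂ ih₁ ih₂ =>
    rintro (a | a) h
    · erw [dst, vmapP₁_eq_b] at h; exact ih₁ a h
    · erw [dst, vmapP₂_eq_b] at h; exact ih₂ a h

end SPD
namespace SPD

lemma sum_arcs_arc (b : Bool) (u c : ℤ) (f : (arc b u c).Arcs → ℤ) :
    ∑ a, f a = f () := by
  letI : Unique (arc b u c).Arcs := inferInstanceAs (Unique Unit)
  exact Fintype.sum_unique f

lemma arc_excess_o (b : Bool) (u c : ℤ) (f : (arc b u c).Arcs → ℤ) :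
    (arc b u c).excess f (Sum.inr false) = f () := by
  erw [excess_eq, sum_arcs_arc]
  simp [src, dst, Vert]

lemma arc_excess_t (b : Bool) (u c : ℤ) (f : (arc b u c).Arcs → ℤ) :
    (arc b u c).excess f (Sum.inr true) = - f () := by
  erw [excess_eq, sum_arcs_arc]
  simp [src, dst, Vert]

/-- target excess is the negative of the origin excess when inner excesses vanish. -/
lemma excess_t_of_inner (g : SPD) (z : g.Arcs → ℤ)
    (hin : ∀ v : g.Inner, g.excess z (Sum.inl v) = 0) :
    g.excess z (Sum.inr true) = - g.excess z (Sum.inr false) := by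
  have h := sum_excess g z
  erw [sum_vert] at h
  have h2 : ∑ v : g.Inner, g.excess z (Sum.inl v) = 0 :=
    Finset.sum_eq_zero fun v _ => hin v
  omega

/-- Lemma P: a vector with positive net value from origin to target and zero inner
excesses contains a sign-consistent unit origin-target "path vector". -/
lemma exists_unit (g : SPD) : ∀ (z : g.Arcs → ℤ),
    (∀ v : g.Inner, g.excess z (Sum.inl v) = 0) →
    0 < g.excess z (Sum.inr false) →
    ∃ w : g.Arcs → ℤ,
      (∀ a, (0 < w a → w a ≤ z a) ∧ (w a < 0 → z a ≤ w a)) ∧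
      (∀ v : g.Inner, g.excess w (Sum.inl v) = 0) ∧
      g.excess w (Sum.inr false) = 1 ∧ g.excess w (Sum.inr true) = -1 := by
  induction g with
  | arc b u c =>
    intro z _ ho
    erw [arc_excess_o] at ho
    refine ⟨fun _ => 1, ?_, fun v => v.elim, ?_, ?_⟩
    · intro a
      have ha : z a = z () := rfl
      dsimp only
      exact ⟨fun _ => by omega, fun h => by omega⟩
    · erw [arc_excess_o]
    · erw [arc_excess_t]
  | series g₁ g₂ ih₁ ih₂ =>
    intro z hin ho
    set z₁ : g₁.Arcs → ℤ := fun a => z (Sum.inl a) with hz₁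
    set z₂ : g₂.Arcs → ℤ := fun a => z (Sum.inr a) with hz₂
    have hin₁ : ∀ v : g₁.Inner, g₁.excess z₁ (Sum.inl v) = 0 := by
      intro v; have := hin (Sum.inl (Sum.inl v)); erw [excess_series_i1] at this; exact this
    have hin₂ : ∀ v : g₂.Inner, g₂.excess z₂ (Sum.inl v) = 0 := by
      intro v; have := hin (Sum.inl (Sum.inr v)); erw [excess_series_i2] at this; exact this
    have ho₁ : 0 < g₁.excess z₁ (Sum.inr false) := by erw [excess_series_o] at ho; exact ho
    have hmid : g₁.excess z₁ (Sum.inr true) + g₂.excess z₂ (Sum.inr false) = 0 := by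
      have := hin (Sum.inr ()); erw [excess_series_mid] at this; exact this
    have ht₁ := excess_t_of_inner g₁ z₁ hin₁
    have ho₂ : 0 < g₂.excess z₂ (Sum.inr false) := by omega
    obtain ⟨w₁, hs₁, hi₁, hwo₁, hwt₁⟩ := ih₁ z₁ hin₁ ho₁
    obtain ⟨w₂, hs₂, hi₂, hwo₂, hwt₂⟩ := ih₂ z₂ hin₂ ho₂
    refine ⟨Sum.elim w₁ w₂, ?_, ?_, ?_, ?_⟩
    · rintro (a | a)
      · exact hs₁ a
      · exact hs₂ a
    · rintro ((v | v) | v)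
      · erw [excess_series_i1]; exact hi₁ v
      · erw [excess_series_i2]; exact hi₂ v
      · erw [excess_series_mid]
        show g₁.excess w₁ _ + g₂.excess w₂ _ = 0
        omega
    · erw [excess_series_o]; exact hwo₁
    · erw [excess_series_t]; exact hwt₂
  | parallel g₁ g₂ ih₁ ih₂ =>
    intro z hin ho
    set z₁ : g₁.Arcs → ℤ := fun a => z (Sum.inl a) with hz₁
    set z₂ : g₂.Arcs → ℤ := fun a => z (Sum.inr a) with hz₂
    have hin₁ : ∀ v : g₁.Inner, g₁.excess z₁ (Sum.inl v) = 0 := by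
      intro v; have := hin (Sum.inl v); erw [excess_parallel_i1] at this; exact this
    have hin₂ : ∀ v : g₂.Inner, g₂.excess z₂ (Sum.inl v) = 0 := by
      intro v; have := hin (Sum.inr v); erw [excess_parallel_i2] at this; exact this
    erw [excess_parallel_b, ← hz₁, ← hz₂] at ho
    by_cases h : 0 < g₁.excess z₁ (Sum.inr false)
    · obtain ⟨w₁, hs₁, hi₁, hwo₁, hwt₁⟩ := ih₁ z₁ hin₁ h
      refine ⟨Sum.elim w₁ (fun _ => 0), ?_, ?_, ?_, ?_⟩
      · rintro (a | a)
        · exact hs₁ a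
        · refine ⟨fun h => ?_, fun h => ?_⟩ <;> simp at h
      · rintro (v | v)
        · erw [excess_parallel_i1]; exact hi₁ v
        · erw [excess_parallel_i2]; exact excess_zero g₂ _
      · erw [excess_parallel_b]
        show g₁.excess w₁ _ + g₂.excess (fun _ => 0) _ = 1
        erw [excess_zero]; omega
      · erw [excess_parallel_b]
        show g₁.excess w₁ _ + g₂.excess (fun _ => 0) _ = -1
        erw [excess_zero]; omega
    · have h₂ : 0 < g₂.excess z₂ (Sum.inr false) := by omega
      obtain ⟨w₂, hs₂, hi₂, hwo₂, hwt₂⟩ := ih₂ z₂ hin₂ h₂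
      refine ⟨Sum.elim (fun _ => 0) w₂, ?_, ?_, ?_, ?_⟩
      · rintro (a | a)
        · refine ⟨fun h => ?_, fun h => ?_⟩ <;> simp at h
        · exact hs₂ a
      · rintro (v | v)
        · erw [excess_parallel_i1]; exact excess_zero g₁ _
        · erw [excess_parallel_i2]; exact hi₂ v
      · erw [excess_parallel_b]
        show g₁.excess (fun _ => 0) _ + g₂.excess w₂ _ = 1
        erw [excess_zero]; omega
      · erw [excess_parallel_b]
        show g₁.excess (fun _ => 0) _ + g₂.excess w₂ _ = -1
        erw [excess_zero]; omega

end SPD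
namespace SPD

/-- From a unit origin-target vector we can extract a strictly positive arc,
since no arc enters the origin. -/
lemma exists_pos_arc (g : SPD) (w : g.Arcs → ℤ)
    (hw : g.excess w (Sum.inr false) = 1) : ∃ a, 0 < w a := by
  by_contra h
  push_neg at h
  have hd : (Finset.univ.filter (fun a => g.dst a = g.origin)) = ∅ := by
    refine Finset.filter_eq_empty_iff.mpr fun a _ => dst_ne_origin g a
  erw [excess, hd] at hw
  simp only [Finset.sum_empty, sub_zero] at hw
  have : ∑ a ∈ Finset.univ.filter (fun a => g.src a = g.origin), w a ≤ 0 :=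
    Finset.sum_nonpos fun a _ => h a
  have hw' : ∑ a ∈ Finset.univ.filter (fun a => g.src a = g.origin), w a = 1 := hw
  omega

/-- Lemma S: if a vector has zero inner excesses, nonpositive excess at the origin,
and a strictly positive arc, then it contains a sign-consistent circulation with a
strictly positive arc.  This is the series-parallel uncrossing step. -/
lemma exists_cycle (g : SPD) : ∀ (z : g.Arcs → ℤ),
    (∀ v : g.Inner, g.excess z (Sum.inl v) = 0) →
    g.excess z (Sum.inr false) ≤ 0 →
    ∀ a₀ : g.Arcs, 0 < z a₀ →
    ∃ w : g.Arcs → ℤ,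
      (∀ a, (0 < w a → w a ≤ z a) ∧ (w a < 0 → z a ≤ w a)) ∧
      (∀ v : g.Vert, g.excess w v = 0) ∧ ∃ a, 0 < w a := by
  induction g with
  | arc b u c =>
    intro z _ ho a₀ ha₀
    have h1 : z a₀ = z () := rfl
    erw [arc_excess_o] at ho
    omega
  | series g₁ g₂ ih₁ ih₂ =>
    intro z hin ho a₀ ha₀
    set z₁ : g₁.Arcs → ℤ := fun a => z (Sum.inl a) with hz₁
    set z₂ : g₂.Arcs → ℤ := fun a => z (Sum.inr a) with hz₂
    have hin₁ : ∀ v : g₁.Inner, g₁.excess z₁ (Sum.inl v) = 0 := by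
      intro v; have := hin (Sum.inl (Sum.inl v)); erw [excess_series_i1] at this; exact this
    have hin₂ : ∀ v : g₂.Inner, g₂.excess z₂ (Sum.inl v) = 0 := by
      intro v; have := hin (Sum.inl (Sum.inr v)); erw [excess_series_i2] at this; exact this
    have ho₁ : g₁.excess z₁ (Sum.inr false) ≤ 0 := by erw [excess_series_o] at ho; exact ho
    have hmid : g₁.excess z₁ (Sum.inr true) + g₂.excess z₂ (Sum.inr false) = 0 := by
      have := hin (Sum.inr ()); erw [excess_series_mid] at this; exact this
    have ht₁ := excess_t_of_inner g₁ z₁ hin₁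
    have ho₂ : g₂.excess z₂ (Sum.inr false) ≤ 0 := by omega
    rcases a₀ with a₀ | a₀
    · obtain ⟨w₁, hs₁, hz₁', a₁, ha₁⟩ := ih₁ z₁ hin₁ ho₁ a₀ ha₀
      refine ⟨Sum.elim w₁ (fun _ => 0), ?_, ?_, ⟨Sum.inl a₁, ha₁⟩⟩
      · rintro (a | a)
        · exact hs₁ a
        · refine ⟨fun h => ?_, fun h => ?_⟩ <;> simp at h
      · rintro (((v | v) | v) | (b | b))
        · erw [excess_series_i1]; exact hz₁' (Sum.inl v)
        · erw [excess_series_i2]; exact excess_zero g₂ _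
        · erw [excess_series_mid]
          show g₁.excess w₁ _ + g₂.excess (fun _ => 0) _ = 0
          erw [excess_zero, hz₁' (Sum.inr true)]; ring
        · erw [excess_series_o]; exact hz₁' (Sum.inr false)
        · erw [excess_series_t]; exact excess_zero g₂ _
    · obtain ⟨w₂, hs₂, hz₂', a₂, ha₂⟩ := ih₂ z₂ hin₂ ho₂ a₀ ha₀
      refine ⟨Sum.elim (fun _ => 0) w₂, ?_, ?_, ⟨Sum.inr a₂, ha₂⟩⟩
      · rintro (a | a)
        · refine ⟨fun h => ?_, fun h => ?_⟩ <;> simp at h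
        · exact hs₂ a
      · rintro (((v | v) | v) | (b | b))
        · erw [excess_series_i1]; exact excess_zero g₁ _
        · erw [excess_series_i2]; exact hz₂' (Sum.inl v)
        · erw [excess_series_mid]
          show g₁.excess (fun _ => 0) _ + g₂.excess w₂ _ = 0
          erw [excess_zero, hz₂' (Sum.inr false)]; ring
        · erw [excess_series_o]; exact excess_zero g₁ _
        · erw [excess_series_t]; exact hz₂' (Sum.inr true)
  | parallel g₁ g₂ ih₁ ih₂ =>
    intro z hin ho a₀ ha₀
    set z₁ : g₁.Arcs → ℤ := fun a => z (Sum.inl a) with hz₁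
    set z₂ : g₂.Arcs → ℤ := fun a => z (Sum.inr a) with hz₂
    have hin₁ : ∀ v : g₁.Inner, g₁.excess z₁ (Sum.inl v) = 0 := by
      intro v; have := hin (Sum.inl v); erw [excess_parallel_i1] at this; exact this
    have hin₂ : ∀ v : g₂.Inner, g₂.excess z₂ (Sum.inl v) = 0 := by
      intro v; have := hin (Sum.inr v); erw [excess_parallel_i2] at this; exact this
    erw [excess_parallel_b, ← hz₁, ← hz₂] at ho
    have ht₁ := excess_t_of_inner g₁ z₁ hin₁
    have ht₂ := excess_t_of_inner g₂ z₂ hin₂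
    -- the crossing circulation, used when one side has positive value
    have cross : g₁.excess z₁ (Sum.inr false) ≤ 0 → g₂.excess z₂ (Sum.inr false) ≤ 0 →
        True := fun _ _ => trivial
    by_cases h₁ : g₁.excess z₁ (Sum.inr false) ≤ 0
    · by_cases h₂ : g₂.excess z₂ (Sum.inr false) ≤ 0
      · -- both sides nonpositive: recurse on the side containing a₀
        rcases a₀ with a₀ | a₀
        · obtain ⟨w₁, hs₁, hz₁', a₁, ha₁⟩ := ih₁ z₁ hin₁ h₁ a₀ ha₀
          refine ⟨Sum.elim w₁ (fun _ => 0), ?_, ?_, ⟨Sum.inl a₁, ha₁⟩⟩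
          · rintro (a | a)
            · exact hs₁ a
            · refine ⟨fun h => ?_, fun h => ?_⟩ <;> simp at h
          · rintro ((v | v) | b)
            · erw [excess_parallel_i1]; exact hz₁' (Sum.inl v)
            · erw [excess_parallel_i2]; exact excess_zero g₂ _
            · erw [excess_parallel_b]
              show g₁.excess w₁ _ + g₂.excess (fun _ => 0) _ = 0
              erw [excess_zero, hz₁' (Sum.inr b)]; ring
        · obtain ⟨w₂, hs₂, hz₂', a₂, ha₂⟩ := ih₂ z₂ hin₂ h₂ a₀ ha₀
          refine ⟨Sum.elim (fun _ => 0) w₂, ?_, ?_, ⟨Sum.inr a₂, ha₂⟩⟩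
          · rintro (a | a)
            · refine ⟨fun h => ?_, fun h => ?_⟩ <;> simp at h
            · exact hs₂ a
          · rintro ((v | v) | b)
            · erw [excess_parallel_i1]; exact excess_zero g₁ _
            · erw [excess_parallel_i2]; exact hz₂' (Sum.inl v)
            · erw [excess_parallel_b]
              show g₁.excess (fun _ => 0) _ + g₂.excess w₂ _ = 0
              erw [excess_zero, hz₂' (Sum.inr b)]; ring
      · -- g₂ has positive value, g₁ has negative value: cross circulation
        push_neg at h₂
        have h₁' : 0 < g₁.excess (fun a => -(z₁ a)) (Sum.inr false) := by
          erw [excess_neg']; omega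
        have hin₁' : ∀ v : g₁.Inner, g₁.excess (fun a => -(z₁ a)) (Sum.inl v) = 0 := by
          intro v; erw [excess_neg', hin₁ v]; ring
        obtain ⟨u₁, hsu₁, hiu₁, huo₁, hut₁⟩ := exists_unit g₁ (fun a => -(z₁ a)) hin₁' h₁'
        obtain ⟨u₂, hsu₂, hiu₂, huo₂, hut₂⟩ := exists_unit g₂ z₂ hin₂ h₂
        obtain ⟨a₂, ha₂⟩ := exists_pos_arc g₂ u₂ huo₂
        refine ⟨Sum.elim (fun a => -(u₁ a)) u₂, ?_, ?_, ⟨Sum.inr a₂, ha₂⟩⟩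
        · rintro (a | a)
          · obtain ⟨t1, t2⟩ := hsu₁ a
            have t1' : 0 < u₁ a → u₁ a ≤ -(z₁ a) := t1
            have t2' : u₁ a < 0 → -(z₁ a) ≤ u₁ a := t2
            show (0 < -(u₁ a) → -(u₁ a) ≤ z₁ a) ∧ (-(u₁ a) < 0 → z₁ a ≤ -(u₁ a))
            exact ⟨fun h => by omega, fun h => by omega⟩
          · exact hsu₂ a
        · rintro ((v | v) | b)
          · erw [excess_parallel_i1]
            show g₁.excess (fun a => -(u₁ a)) _ = 0
            erw [excess_neg', hiu₁ v]; ring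
          · erw [excess_parallel_i2]; exact hiu₂ v
          · erw [excess_parallel_b]
            show g₁.excess (fun a => -(u₁ a)) _ + g₂.excess u₂ _ = 0
            erw [excess_neg']
            cases b
            · omega
            · omega
    · -- g₁ has positive value
      push_neg at h₁
      have h₂' : 0 < g₂.excess (fun a => -(z₂ a)) (Sum.inr false) := by
        erw [excess_neg']; omega
      have hin₂' : ∀ v : g₂.Inner, g₂.excess (fun a => -(z₂ a)) (Sum.inl v) = 0 := by
        intro v; erw [excess_neg', hin₂ v]; ring
      obtain ⟨u₁, hsu₁, hiu₁, huo₁, hut₁⟩ := exists_unit g₁ z₁ hin₁ h₁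
      obtain ⟨u₂, hsu₂, hiu₂, huo₂, hut₂⟩ := exists_unit g₂ (fun a => -(z₂ a)) hin₂' h₂'
      obtain ⟨a₁, ha₁⟩ := exists_pos_arc g₁ u₁ huo₁
      refine ⟨Sum.elim u₁ (fun a => -(u₂ a)), ?_, ?_, ⟨Sum.inl a₁, ha₁⟩⟩
      · rintro (a | a)
        · exact hsu₁ a
        · obtain ⟨t1, t2⟩ := hsu₂ a
          have t1' : 0 < u₂ a → u₂ a ≤ -(z₂ a) := t1
          have t2' : u₂ a < 0 → -(z₂ a) ≤ u₂ a := t2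
          show (0 < -(u₂ a) → -(u₂ a) ≤ z₂ a) ∧ (-(u₂ a) < 0 → z₂ a ≤ -(u₂ a))
          exact ⟨fun h => by omega, fun h => by omega⟩
      · rintro ((v | v) | b)
        · erw [excess_parallel_i1]; exact hiu₁ v
        · erw [excess_parallel_i2]
          show g₂.excess (fun a => -(u₂ a)) _ = 0
          erw [excess_neg', hiu₂ v]; ring
        · erw [excess_parallel_b]
          show g₁.excess u₁ _ + g₂.excess (fun a => -(u₂ a)) _ = 0
          erw [excess_neg']
          cases b
          · omega
          · omega

end SPD
namespace SPD

lemma bal_inner (g : SPD) (d : ℤ) (v : g.Inner) : g.bal d (Sum.inl v) = 0 := by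
  simp [bal, origin, target, Vert]

lemma bal_o (g : SPD) (d : ℤ) : g.bal d (Sum.inr false) = d := by
  simp [bal, origin, target, Vert]

lemma flowCost_sub (g : SPD) (f w : g.Arcs → ℤ) :
    g.flowCost (fun a => f a - w a) = g.flowCost f - ∑ a, g.cost a * w a := by
  unfold flowCost
  erw [← Finset.sum_sub_distrib]
  exact Finset.sum_congr rfl fun a _ => by ring

lemma flowCost_add (g : SPD) (f w : g.Arcs → ℤ) :
    g.flowCost (fun a => f a + w a) = g.flowCost f + ∑ a, g.cost a * w a := by
  unfold flowCost
  erw [← Finset.sum_add_distrib]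
  exact Finset.sum_congr rfl fun a _ => by ring

/-- The uncrossing improvement step: a robust flow with a violated arc can be
modified into a robust flow of no larger cost with strictly smaller violation. -/
lemma improve (g : SPD) (d₁ d₂ : ℤ) (hd : d₁ ≤ d₂) (f₁ f₂ : g.Arcs → ℤ)
    (hr : g.IsRobust2 d₁ d₂ f₁ f₂) (a₀ : g.Arcs) (hviol : f₂ a₀ < f₁ a₀) :
    ∃ f₁' f₂', g.IsRobust2 d₁ d₂ f₁' f₂' ∧ g.rcost f₁' f₂' ≤ g.rcost f₁ f₂ ∧
      (∑ a, max (f₁' a - f₂' a) 0) < (∑ a, max (f₁ a - f₂ a) 0) := by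
  obtain ⟨⟨hb₁, he₁⟩, ⟨hb₂, he₂⟩, hfix⟩ := hr
  have hzin : ∀ v : g.Inner, g.excess (fun a => f₁ a - f₂ a) (Sum.inl v) = 0 := by
    intro v
    erw [excess_sub', he₁, he₂, bal_inner]
    ring
  have hzo : g.excess (fun a => f₁ a - f₂ a) (Sum.inr false) ≤ 0 := by
    erw [excess_sub', he₁, he₂, bal_o, bal_o]
    omega
  obtain ⟨w, hsign, hcirc, a₁, ha₁⟩ :=
    exists_cycle g (fun a => f₁ a - f₂ a) hzin hzo a₀ (by show 0 < f₁ a₀ - f₂ a₀; omega)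
  have hsign' : ∀ a, (0 < w a → w a ≤ f₁ a - f₂ a) ∧ (w a < 0 → f₁ a - f₂ a ≤ w a) :=
    hsign
  have hwfix : ∀ a, g.fixedArc a = true → w a = 0 := by
    intro a ha
    have h := hfix a ha
    have := hsign' a
    omega
  -- pointwise bound for the violation sum
  have key : ∀ a : g.Arcs, max ((f₁ a - w a) - f₂ a) 0 ≤ max (f₁ a - f₂ a) 0 := by
    intro a
    have := hsign' a
    refine max_le ?_ (le_max_right _ _)
    rcases lt_trichotomy (w a) 0 with h | h | h
    · have := this.2 h
      have h2 : f₁ a - w a - f₂ a ≤ 0 := by omega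
      exact h2.trans (le_max_right _ _)
    · erw [h, sub_zero]; exact le_max_left _ _
    · have := this.1 h
      have h2 : f₁ a - w a - f₂ a ≤ f₁ a - f₂ a := by omega
      exact h2.trans (le_max_left _ _)
  have keylt : max ((f₁ a₁ - w a₁) - f₂ a₁) 0 < max (f₁ a₁ - f₂ a₁) 0 := by
    have hs := hsign' a₁
    have h1 : w a₁ ≤ f₁ a₁ - f₂ a₁ := hs.1 ha₁
    erw [max_eq_left (by omega : (0:ℤ) ≤ f₁ a₁ - w a₁ - f₂ a₁),
        max_eq_left (by omega : (0:ℤ) ≤ f₁ a₁ - f₂ a₁)]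
    omega
  have hΦ : (∑ a, max ((f₁ a - w a) - f₂ a) 0) < ∑ a, max (f₁ a - f₂ a) 0 :=
    Finset.sum_lt_sum (fun a _ => key a) ⟨a₁, Finset.mem_univ a₁, keylt⟩
  -- feasibility of the two candidate modifications
  have hflow₁ : g.IsFlow (g.bal d₁) (fun a => f₁ a - w a) := by
    constructor
    · intro a
      have hs := hsign' a
      have hb1 := hb₁ a
      have hb2 := hb₂ a
      show 0 ≤ f₁ a - w a ∧ f₁ a - w a ≤ g.cap a
      constructor <;> omega
    · intro v
      erw [excess_sub', he₁, hcirc]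
      ring
  have hflow₂ : g.IsFlow (g.bal d₂) (fun a => f₂ a + w a) := by
    constructor
    · intro a
      have hs := hsign' a
      have hb1 := hb₁ a
      have hb2 := hb₂ a
      show 0 ≤ f₂ a + w a ∧ f₂ a + w a ≤ g.cap a
      constructor <;> omega
    · intro v
      erw [excess_add', he₂, hcirc]
      ring
  by_cases hcw : 0 ≤ ∑ a, g.cost a * w a
  · refine ⟨fun a => f₁ a - w a, f₂, ⟨hflow₁, ⟨hb₂, he₂⟩, ?_⟩, ?_, hΦ⟩
    · intro a ha
      have := hwfix a ha
      have := hfix a ha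
      show f₁ a - w a = f₂ a
      omega
    · unfold rcost
      erw [flowCost_sub]
      exact max_le_max (by omega) le_rfl
  · push_neg at hcw
    refine ⟨f₁, fun a => f₂ a + w a, ⟨⟨hb₁, he₁⟩, hflow₂, ?_⟩, ?_, ?_⟩
    · intro a ha
      have := hwfix a ha
      have := hfix a ha
      show f₁ a = f₂ a + w a
      omega
    · unfold rcost
      erw [flowCost_add]
      exact max_le_max le_rfl (by omega)
    · have : ∀ a, f₁ a - (f₂ a + w a) = (f₁ a - w a) - f₂ a := fun a => by ring
      calc (∑ a, max (f₁ a - (f₂ a + w a)) 0)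
          = ∑ a, max ((f₁ a - w a) - f₂ a) 0 := by
            exact Finset.sum_congr rfl fun a _ => by erw [this a]
        _ < _ := hΦ

end SPD

/-- Lemma 10 of the paper: for a two-scenario instance on an SP digraph
with unique source at the origin, unique sink at the target, and demands `d₁ ≤ d₂`, if
a robust flow exists then there exists an optimal integral robust flow `(f₁, f₂)` with
`f₂(a) ≥ f₁(a)` for every arc `a`. -/
theorem pointwise_monotone_optimal_exists (g : SPD) (hg : g.nonnegData)
    (d₁ d₂ : ℤ) (hd₀ : 0 ≤ d₁) (hd : d₁ ≤ d₂)
    (hfeas : ∃ f₁ f₂, g.IsRobust2 d₁ d₂ f₁ f₂) :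
    ∃ f₁ f₂, g.Optimal d₁ d₂ f₁ f₂ ∧ ∀ a, f₁ a ≤ f₂ a := by
  classical
  set B : Finset (g.Arcs → ℤ) :=
    Fintype.piFinset (fun a : g.Arcs => Finset.Icc (0:ℤ) (g.cap a)) with hB
  have hmemB : ∀ f : g.Arcs → ℤ, g.IsFlow (g.bal d₁) f ∨ g.IsFlow (g.bal d₂) f → f ∈ B := by
    intro f hf
    rw [hB, Fintype.mem_piFinset]
    intro a
    rw [Finset.mem_Icc]
    rcases hf with hf | hf
    · exact (hf.1 a)
    · exact (hf.1 a)
  set P : Finset ((g.Arcs → ℤ) × (g.Arcs → ℤ)) :=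
    (B ×ˢ B).filter (fun p => g.IsRobust2 d₁ d₂ p.1 p.2) with hP
  have hmemP : ∀ p : (g.Arcs → ℤ) × (g.Arcs → ℤ), g.IsRobust2 d₁ d₂ p.1 p.2 → p ∈ P := by
    intro p hp
    rw [hP, Finset.mem_filter, Finset.mem_product]
    exact ⟨⟨hmemB p.1 (Or.inl hp.1), hmemB p.2 (Or.inr hp.2.1)⟩, hp⟩
  obtain ⟨h₁, h₂, hrob⟩ := hfeas
  have hPne : P.Nonempty := ⟨(h₁, h₂), hmemP _ hrob⟩
  obtain ⟨p, hpP, hpmin⟩ := P.exists_min_image (fun p => g.rcost p.1 p.2) hPne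
  set Q : Finset ((g.Arcs → ℤ) × (g.Arcs → ℤ)) :=
    P.filter (fun q => g.rcost q.1 q.2 ≤ g.rcost p.1 p.2) with hQ
  have hQne : Q.Nonempty := ⟨p, by rw [hQ, Finset.mem_filter]; exact ⟨hpP, le_rfl⟩⟩
  obtain ⟨r, hrQ, hrmin⟩ :=
    Q.exists_min_image (fun q => ∑ a, max (q.1 a - q.2 a) 0) hQne
  rw [hQ, Finset.mem_filter] at hrQ
  obtain ⟨hrP, hrc⟩ := hrQ
  have hrrob : g.IsRobust2 d₁ d₂ r.1 r.2 := by
    rw [hP, Finset.mem_filter] at hrP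
    exact hrP.2
  have hropt : g.Optimal d₁ d₂ r.1 r.2 := by
    refine ⟨hrrob, fun h₁' h₂' hrob' => ?_⟩
    exact hrc.trans (hpmin (h₁', h₂') (hmemP _ hrob'))
  refine ⟨r.1, r.2, hropt, ?_⟩
  by_contra hmono
  push_neg at hmono
  obtain ⟨a₀, ha₀⟩ := hmono
  obtain ⟨f₁', f₂', hrob', hc', hΦ⟩ := SPD.improve g d₁ d₂ hd r.1 r.2 hrrob a₀ ha₀
  have hmem' : (f₁', f₂') ∈ Q := by
    rw [hQ, Finset.mem_filter]
    exact ⟨hmemP _ hrob', hc'.trans hrc⟩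
  exact absurd (hrmin (f₁', f₂') hmem') (not_le.mpr hΦ)
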